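/- For every real m×n matrix A, herwdisc(A, 2) ≤ 2 · herdisc(A, 2). -/

import Mathlib

open Finset

/-- `c`-color discrepancy of a matrix: minimum over `c`-colorings `p` of the columns of the
maximum over colors `d` and rows `i` of `|∑_{j : p j = d} A i j - (1/c) ∑_j A i j|`. -/
noncomputable def mdisc {ι κ : Type*} [Fintype ι] [Fintype κ] (A : ι → κ → ℝ) (c : ℕ) : ℝ :=
  ⨅ p : κ → Fin c, ⨆ d : Fin c, ⨆ i : ι,
    |∑ j ∈ Finset.univ.filter (fun j => p j = d), A i j - (1 / (c : ℝ)) * ∑ j, A i j|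

/-- hereditary `c`-color discrepancy: maximum of `mdisc` over all nonempty column submatrices. -/
noncomputable def mherdisc {ι : Type*} [Fintype ι] {n : ℕ} (A : ι → Fin n → ℝ) (c : ℕ) : ℝ :=
  ⨆ J : {J : Finset (Fin n) // J.Nonempty}, mdisc (fun i (j : {x // x ∈ J.1}) => A i j.1) c

/-- `d_A(p,q) = max_i |∑_j a_{ij} (p j - q j)|` for floating colorings `p, q`. -/
noncomputable def dA {ι κ : Type*} [Fintype ι] [Fintype κ] (A : ι → κ → ℝ) (p q : κ → ℝ) : ℝ :=
  ⨆ i : ι, |∑ j, A i j * (p j - q j)|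

/-- weighted discrepancy with weight `z`: min over `{0,1}`-colorings `q` of `d_A(z·1, q)`. -/
noncomputable def wdisc {ι κ : Type*} [Fintype ι] [Fintype κ] (A : ι → κ → ℝ) (z : ℝ) : ℝ :=
  ⨅ q : κ → Bool, dA A (fun _ => z) (fun j => if q j then 1 else 0)

/-- `wdisc(A,2) = sup_{z ∈ [0,1]} wdisc(A,z)`. -/
noncomputable def wdisc2 {ι κ : Type*} [Fintype ι] [Fintype κ] (A : ι → κ → ℝ) : ℝ :=
  ⨆ z : Set.Icc (0:ℝ) 1, wdisc A z

/-- hereditary weighted discrepancy in two colors. -/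
noncomputable def mherwdisc2 {ι : Type*} [Fintype ι] {n : ℕ} (A : ι → Fin n → ℝ) : ℝ :=
  ⨆ J : {J : Finset (Fin n) // J.Nonempty}, wdisc2 (fun i (j : {x // x ∈ J.1}) => A i j.1)

lemma mdisc_nonneg {ι κ : Type*} [Fintype ι] [Fintype κ] (A : ι → κ → ℝ) (c : ℕ) :
    0 ≤ mdisc A c := by
  classical
  by_cases h : Nonempty (κ → Fin c)
  · exact le_ciInf fun p => Real.iSup_nonneg fun d => Real.iSup_nonneg fun i => abs_nonneg _
  · rw [not_nonempty_iff] at h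
    rw [mdisc, Real.iInf_of_isEmpty]

lemma mherdisc_nonneg {ι : Type*} [Fintype ι] {n : ℕ} (A : ι → Fin n → ℝ) (c : ℕ) :
    0 ≤ mherdisc A c :=
  Real.iSup_nonneg fun _ => mdisc_nonneg _ _

lemma exists_coloring {m : ℕ} {κ : Type*} [Fintype κ] (C : Fin m → κ → ℝ) :
    ∃ p : κ → Fin 2, ∀ i, |∑ j ∈ Finset.univ.filter (fun j => p j = 0), C i j
      - (1 / ((2:ℕ) : ℝ)) * ∑ j, C i j| ≤ mdisc C 2 := by
  classical
  set g : (κ → Fin 2) → Fin 2 → Fin m → ℝ := fun p d i =>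
    |∑ j ∈ Finset.univ.filter (fun j => p j = d), C i j - (1 / ((2:ℕ) : ℝ)) * ∑ j, C i j|
    with hg
  obtain ⟨p, hp⟩ := Finite.exists_min (fun p : κ → Fin 2 => ⨆ d : Fin 2, ⨆ i : Fin m, g p d i)
  refine ⟨p, fun i => ?_⟩
  have h2 : g p 0 i ≤ ⨆ i : Fin m, g p 0 i := le_ciSup (Finite.bddAbove_range _) i
  have h1 : (⨆ i : Fin m, g p 0 i) ≤ ⨆ d : Fin 2, ⨆ i : Fin m, g p d i :=
    le_ciSup (f := fun d => ⨆ i : Fin m, g p d i) (Finite.bddAbove_range _) 0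
  have h3 : mdisc C 2 = ⨅ p : κ → Fin 2, ⨆ d : Fin 2, ⨆ i : Fin m, g p d i := by
    rfl
  rw [h3]
  exact (h2.trans h1).trans (le_ciInf fun q => hp q)

lemma split_lemma {m n : ℕ} (A : Fin m → Fin n → ℝ) (S : Finset (Fin n)) :
    ∃ ε : Fin n → ℝ, (∀ j, ε j = 1 ∨ ε j = -1) ∧
      ∀ i, |∑ j ∈ S, A i j * ε j| ≤ 2 * mherdisc A 2 := by
  classical
  rcases S.eq_empty_or_nonempty with rfl | hS
  · refine ⟨fun _ => 1, fun _ => Or.inl rfl, fun i => ?_⟩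
    simp only [Finset.sum_empty, abs_zero]
    exact mul_nonneg (by norm_num) (mherdisc_nonneg A 2)
  · set C : Fin m → {x // x ∈ S} → ℝ := fun i j => A i j.1 with hC
    obtain ⟨p, hp⟩ := exists_coloring C
    have hmd : mdisc C 2 ≤ mherdisc A 2 :=
      le_ciSup (f := fun J : {J : Finset (Fin n) // J.Nonempty} =>
        mdisc (fun i (j : {x // x ∈ J.1}) => A i j.1) 2) (Finite.bddAbove_range _) ⟨S, hS⟩
    refine ⟨fun j => if h : j ∈ S then (if p ⟨j, h⟩ = 0 then 1 else -1) else 1,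
      fun j => ?_, fun i => ?_⟩
    · by_cases h : j ∈ S
      · simp only [dif_pos h]; split <;> simp
      · simp [h]
    · have ha : ∑ j ∈ Finset.univ.filter (fun j => p j = 0),
          C i j * (if p j = 0 then (1:ℝ) else -1)
          = ∑ j ∈ Finset.univ.filter (fun j : {x // x ∈ S} => p j = 0), C i j :=
        Finset.sum_congr rfl fun j hj => by
          rw [if_pos (Finset.mem_filter.mp hj).2, mul_one]
      have hb : ∑ j ∈ Finset.univ.filter (fun j : {x // x ∈ S} => ¬ p j = 0),
          C i j * (if p j = 0 then (1:ℝ) else -1)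
          = - ∑ j ∈ Finset.univ.filter (fun j : {x // x ∈ S} => ¬ p j = 0), C i j := by
        rw [← Finset.sum_neg_distrib]
        exact Finset.sum_congr rfl fun j hj => by
          rw [if_neg (Finset.mem_filter.mp hj).2, mul_neg_one]
      have hsplit := Finset.sum_filter_add_sum_filter_not Finset.univ
        (fun j : {x // x ∈ S} => p j = 0) (fun j => C i j)
      have key : (∑ j ∈ S, A i j *
            (if h : j ∈ S then (if p ⟨j, h⟩ = 0 then (1:ℝ) else -1) else 1))
          = 2 * (∑ j ∈ Finset.univ.filter (fun j : {x // x ∈ S} => p j = 0), C i j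
            - (1/((2:ℕ):ℝ)) * ∑ j, C i j) := by
        rw [← Finset.sum_coe_sort S
          (fun j => A i j * (if h : j ∈ S then (if p ⟨j, h⟩ = 0 then (1:ℝ) else -1) else 1))]
        have hterm : ∀ j : {x // x ∈ S},
            A i j.1 * (if h : (j : Fin n) ∈ S then (if p ⟨j, h⟩ = 0 then (1:ℝ) else -1) else 1)
            = C i j * (if p j = 0 then (1:ℝ) else -1) := fun j => by
          rw [dif_pos j.2]
        rw [Finset.sum_congr rfl (fun j _ => hterm j),
          ← Finset.sum_filter_add_sum_filter_not Finset.univ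
            (fun j : {x // x ∈ S} => p j = 0)
            (fun j => C i j * (if p j = 0 then (1:ℝ) else -1)), ha, hb]
        push_cast
        linarith [hsplit]
      rw [key, abs_mul, abs_two]
      exact mul_le_mul_of_nonneg_left ((hp i).trans hmd) (by norm_num)

lemma dyadic_step {K t u : ℕ} (h : 2 * u = t + 1) :
    (t : ℝ) / 2^(K+1) + (2:ℝ)⁻¹^(K+1) = (u : ℝ) / 2^K := by
  have hc : (2:ℝ) * u = (t : ℝ) + 1 := by exact_mod_cast h
  rw [inv_pow, inv_eq_one_div]
  field_simp
  ring_nf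
  ring_nf at hc
  nlinarith [pow_pos (by norm_num : (0:ℝ) < 2) K]

lemma dyadic_step' {K t u : ℕ} (h : 2 * u + 1 = t) :
    (t : ℝ) / 2^(K+1) - (2:ℝ)⁻¹^(K+1) = (u : ℝ) / 2^K := by
  have hc : (2:ℝ) * u + 1 = (t : ℝ) := by exact_mod_cast h
  rw [inv_pow, inv_eq_one_div]
  field_simp
  ring_nf
  ring_nf at hc
  nlinarith [pow_pos (by norm_num : (0:ℝ) < 2) K]

lemma dyadic_even {K t u : ℕ} (h : 2 * u = t) :
    (t : ℝ) / 2^(K+1) = (u : ℝ) / 2^K := by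
  have hc : (2:ℝ) * u = (t : ℝ) := by exact_mod_cast h
  field_simp
  ring_nf
  ring_nf at hc
  nlinarith [pow_pos (by norm_num : (0:ℝ) < 2) K]

lemma rounding {m n : ℕ} (A : Fin m → Fin n → ℝ) :
    ∀ K : ℕ, ∀ x : Fin n → ℝ, (∀ j, ∃ t : ℕ, t ≤ 2^K ∧ x j = (t : ℝ) / 2^K) →
    ∃ q : Fin n → Bool, (∀ j, x j = 0 → q j = false) ∧
      ∀ i, |∑ j, A i j * (x j - (if q j then (1:ℝ) else 0))|
        ≤ 2 * mherdisc A 2 * (1 - (2:ℝ)⁻¹^K) := by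
  classical
  intro K
  induction K with
  | zero =>
    intro x hx
    refine ⟨fun j => decide (x j = 1), fun j hj => by simp [hj], fun i => ?_⟩
    have hz : ∀ j, x j - (if x j = 1 then (1:ℝ) else 0) = 0 := by
      intro j
      obtain ⟨t, ht, hxj⟩ := hx j
      interval_cases t <;> simp_all
    have hzero : ∑ j, A i j * (x j - if x j = 1 then (1:ℝ) else 0) = 0 :=
      Finset.sum_eq_zero fun j _ => by rw [hz j, mul_zero]
    simp only [decide_eq_true_eq, hzero, abs_zero]
    norm_num
  | succ K ih =>
    intro x hx
    choose t ht hxt using hx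
    set S : Finset (Fin n) := Finset.univ.filter (fun j => t j % 2 = 1) with hS
    obtain ⟨ε, hε1, hε2⟩ := split_lemma A S
    set c : ℝ := (2:ℝ)⁻¹^(K+1) with hc
    set x' : Fin n → ℝ := fun j => x j + (if j ∈ S then ε j * c else 0) with hx'
    have hp2 : 2^(K+1) = 2 * 2^K := by rw [pow_succ]; ring
    have hx'dy : ∀ j, ∃ t' : ℕ, t' ≤ 2^K ∧ x' j = (t' : ℝ) / 2^K := by
      intro j
      by_cases hjS : j ∈ S
      · have hodd : t j % 2 = 1 := by simpa [hS] using hjS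
        have hx'j : x' j = x j + ε j * c := by
          simp only [hx']
          rw [if_pos hjS]
        rcases hε1 j with hε | hε
        · refine ⟨(t j + 1) / 2, ?_, ?_⟩
          · have h1 : t j ≤ 2^(K+1) := ht j
            omega
          · have h2u : 2 * ((t j + 1) / 2) = t j + 1 := by omega
            rw [hx'j, hε, one_mul, hxt j, hc]
            exact dyadic_step h2u
        · refine ⟨t j / 2, by have := ht j; omega, ?_⟩
          have h2u : 2 * (t j / 2) + 1 = t j := by omega
          rw [hx'j, hε, neg_one_mul, ← sub_eq_add_neg, hxt j, hc]
          exact dyadic_step' h2u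
      · have heven : t j % 2 = 0 := by
          by_contra h
          exact hjS (by simp [hS]; omega)
        refine ⟨t j / 2, by have := ht j; omega, ?_⟩
        have h2u : 2 * (t j / 2) = t j := by omega
        have hx'j : x' j = x j := by
          simp only [hx']
          rw [if_neg hjS, add_zero]
        rw [hx'j, hxt j]
        exact dyadic_even h2u
    obtain ⟨q, hq0, hq⟩ := ih x' hx'dy
    refine ⟨q, ?_, ?_⟩
    · intro j hj
      apply hq0
      have ht0 : t j = 0 := by
        have := hxt j
        rw [hj] at this
        have h2 : ((2:ℝ))^(K+1) ≠ 0 := by positivity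
        have : (t j : ℝ) = 0 := by
          field_simp at this
          linarith
        exact_mod_cast this
      have hjS : j ∉ S := by simp [hS, ht0]
      simp [hx', if_neg hjS, hj]
    · intro i
      have h1 : ∑ j, A i j * (x' j - x j) = c * ∑ j ∈ S, A i j * ε j := by
        have hterm : ∀ j, A i j * (x' j - x j) = (if j ∈ S then c * (A i j * ε j) else 0) := by
          intro j
          by_cases h : j ∈ S <;> simp [hx', h] <;> ring
        rw [Finset.sum_congr rfl (fun j _ => hterm j), Finset.sum_ite_mem, Finset.univ_inter,
          ← Finset.mul_sum]
      have h2 : ∑ j, A i j * (x j - (if q j then (1:ℝ) else 0))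
          = (∑ j, A i j * (x' j - (if q j then (1:ℝ) else 0)))
            - c * ∑ j ∈ S, A i j * ε j := by
        rw [← h1, ← Finset.sum_sub_distrib]
        exact Finset.sum_congr rfl fun j _ => by ring
      rw [h2]
      have hcpos : (0:ℝ) ≤ c := by rw [hc]; positivity
      have hb1 := hq i
      have hb2 : |c * ∑ j ∈ S, A i j * ε j| ≤ c * (2 * mherdisc A 2) := by
        rw [abs_mul, abs_of_nonneg hcpos]
        exact mul_le_mul_of_nonneg_left (hε2 i) hcpos
      have habs := abs_sub (∑ j, A i j * (x' j - (if q j then (1:ℝ) else 0)))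
        (c * ∑ j ∈ S, A i j * ε j)
      have hpow : (2:ℝ)⁻¹^K = 2 * (2:ℝ)⁻¹^(K+1) := by
        rw [pow_succ]; ring
      have hH := mherdisc_nonneg A 2
      calc |(∑ j, A i j * (x' j - (if q j then (1:ℝ) else 0)))
            - c * ∑ j ∈ S, A i j * ε j|
          ≤ |∑ j, A i j * (x' j - (if q j then (1:ℝ) else 0))|
            + |c * ∑ j ∈ S, A i j * ε j| := habs
        _ ≤ 2 * mherdisc A 2 * (1 - (2:ℝ)⁻¹^K) + c * (2 * mherdisc A 2) := add_le_add hb1 hb2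
        _ = 2 * mherdisc A 2 * (1 - (2:ℝ)⁻¹^(K+1)) := by rw [hc]; nlinarith [hpow]

/-- For every real m×n matrix A, herwdisc(A, 2) ≤ 2 · herdisc(A, 2). -/
theorem herwdisc_le_two_mul_herdisc {m n : ℕ} (hm : 0 < m) (hn : 0 < n)
    (A : Fin m → Fin n → ℝ) :
    mherwdisc2 A ≤ 2 * mherdisc A 2 := by
  classical
  have hmne : Nonempty (Fin m) := ⟨⟨0, hm⟩⟩
  have hH := mherdisc_nonneg A 2
  rw [mherwdisc2]
  have hJne : Nonempty {J : Finset (Fin n) // J.Nonempty} :=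
    ⟨⟨{⟨0, hn⟩}, Finset.singleton_nonempty _⟩⟩
  refine ciSup_le fun J => ?_
  rw [wdisc2]
  have hIne : Nonempty (Set.Icc (0:ℝ) 1) := ⟨⟨0, by norm_num⟩⟩
  refine ciSup_le fun zz => ?_
  obtain ⟨z, hz0, hz1⟩ := zz
  simp only
  refine le_of_forall_pos_le_add fun δ hδ => ?_
  set C : ℝ := ∑ i, ∑ j, |A i j| with hCdef
  have hC0 : 0 ≤ C := Finset.sum_nonneg fun i _ => Finset.sum_nonneg fun j _ => abs_nonneg _
  obtain ⟨K, hK⟩ := exists_pow_lt_of_lt_one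
    (div_pos hδ (by linarith : (0:ℝ) < C + 1)) (by norm_num : (2:ℝ)⁻¹ < 1)
  have hppos : (0:ℝ) < (2:ℝ)⁻¹^K := by positivity
  have h2Kpos : (0:ℝ) < (2:ℝ)^K := by positivity
  have hinv : (2:ℝ)⁻¹^K = ((2:ℝ)^K)⁻¹ := by rw [← inv_pow]
  have hCK : C * (2:ℝ)⁻¹^K ≤ δ := by
    have h1 : (2:ℝ)⁻¹^K * (C + 1) < δ := (lt_div_iff₀ (by linarith)).mp hK
    nlinarith
  -- dyadic approximation of z
  set t : ℕ := ⌊z * 2^K⌋₊ with htdef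
  have hfl : (t : ℝ) ≤ z * 2^K := Nat.floor_le (by positivity)
  have hlt : z * 2^K < t + 1 := Nat.lt_floor_add_one _
  have ht2K : t ≤ 2^K := by
    have h1 : (t : ℝ) ≤ ((2^K : ℕ) : ℝ) := by push_cast; nlinarith
    exact_mod_cast h1
  set z' : ℝ := (t : ℝ) / 2^K with hz'def
  have hz'le : z' ≤ z := by
    rw [hz'def, div_le_iff₀ h2Kpos]
    exact hfl
  have hmulinv : (2:ℝ)^K * ((2:ℝ)^K)⁻¹ = 1 := mul_inv_cancel₀ (ne_of_gt h2Kpos)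
  have hzz' : z - z' ≤ (2:ℝ)⁻¹^K := by
    rw [hz'def, hinv, div_eq_mul_inv]
    nlinarith
  -- run the rounding on x = z' • 1_J
  set x : Fin n → ℝ := fun j => if j ∈ J.1 then z' else 0 with hxdef
  have hxdy : ∀ j, ∃ t' : ℕ, t' ≤ 2^K ∧ x j = (t' : ℝ) / 2^K := by
    intro j
    by_cases hj : j ∈ J.1
    · exact ⟨t, ht2K, by simp [hxdef, hj, hz'def]⟩
    · exact ⟨0, by positivity, by simp [hxdef, hj]⟩
  obtain ⟨q, hq0, hq⟩ := rounding A K x hxdy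
  -- choose the coloring on the submatrix
  refine le_trans (ciInf_le ?_ (fun j : {x // x ∈ J.1} => q j.1)) ?_
  · refine ⟨0, ?_⟩
    rintro w ⟨q', rfl⟩
    exact Real.iSup_nonneg fun i => abs_nonneg _
  rw [dA]
  refine ciSup_le fun i => ?_
  have e1 : ∑ j : {x // x ∈ J.1}, A i j.1 * (z - (if q j.1 then (1:ℝ) else 0))
      = ∑ j ∈ J.1, A i j * (z - (if q j then (1:ℝ) else 0)) :=
    Finset.sum_coe_sort J.1 (fun j => A i j * (z - (if q j then (1:ℝ) else 0)))
  have e2 : ∑ j ∈ J.1, A i j * (x j - (if q j then (1:ℝ) else 0))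
      = ∑ j, A i j * (x j - (if q j then (1:ℝ) else 0)) := by
    refine Finset.sum_subset (Finset.subset_univ J.1) fun j _ hj => ?_
    have hx0 : x j = 0 := by simp [hxdef, hj]
    rw [hx0, hq0 j hx0]
    norm_num
  have e3 : ∑ j ∈ J.1, A i j * (z - (if q j then (1:ℝ) else 0))
      = (∑ j ∈ J.1, A i j * (x j - (if q j then (1:ℝ) else 0)))
        + ∑ j ∈ J.1, A i j * (z - z') := by
    rw [← Finset.sum_add_distrib]
    refine Finset.sum_congr rfl fun j hj => ?_
    rw [show x j = z' from if_pos hj]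
    ring
  have hrow : ∑ j ∈ J.1, |A i j| ≤ C := by
    rw [hCdef]
    have h1 : ∑ j ∈ J.1, |A i j| ≤ ∑ j, |A i j| :=
      Finset.sum_le_sum_of_subset_of_nonneg (Finset.subset_univ _)
        (fun j _ _ => abs_nonneg _)
    refine h1.trans (Finset.single_le_sum (f := fun i => ∑ j, |A i j|)
      (fun i _ => Finset.sum_nonneg fun j _ => abs_nonneg _) (Finset.mem_univ i))
  have hb2 : |∑ j ∈ J.1, A i j * (z - z')| ≤ C * (2:ℝ)⁻¹^K := by
    refine (Finset.abs_sum_le_sum_abs _ _).trans ?_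
    have : ∀ j ∈ J.1, |A i j * (z - z')| ≤ |A i j| * (2:ℝ)⁻¹^K := by
      intro j _
      rw [abs_mul]
      exact mul_le_mul_of_nonneg_left
        (by rw [abs_of_nonneg (by linarith : (0:ℝ) ≤ z - z')]; exact hzz') (abs_nonneg _)
    refine (Finset.sum_le_sum this).trans ?_
    rw [← Finset.sum_mul]
    exact mul_le_mul_of_nonneg_right hrow (le_of_lt hppos)
  have hb1 : |∑ j, A i j * (x j - (if q j then (1:ℝ) else 0))| ≤ 2 * mherdisc A 2 := by
    refine (hq i).trans ?_
    nlinarith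
  rw [e1, e3]
  calc |(∑ j ∈ J.1, A i j * (x j - (if q j then (1:ℝ) else 0)))
        + ∑ j ∈ J.1, A i j * (z - z')|
      ≤ |∑ j ∈ J.1, A i j * (x j - (if q j then (1:ℝ) else 0))|
        + |∑ j ∈ J.1, A i j * (z - z')| := abs_add_le _ _
    _ ≤ 2 * mherdisc A 2 + C * (2:ℝ)⁻¹^K := add_le_add (by rw [e2]; exact hb1) hb2
    _ ≤ 2 * mherdisc A 2 + δ := by linarith
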